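/- Characterization of slice regularity by slice restrictions: Let F = (F₁, F₂) be a quaternionic stem function of class C¹ on D and f = I(F) the induced slice function on Ω_D. Then F is holomorphic (i.e. f is slice regular) if and only if for every J ∈ 𝕊 the restriction f_J of f to D_J := Ω_D ∩ ℂ_Jⁿ is holomorphic with respect to J, meaning that for each t = 1, …, n and every point α + βJ ∈ D_J one has (∂/∂α_t) f_J(α + βJ) + J·(∂/∂β_t) f_J(α + βJ) = 0. -/

import Mathlib

/-- The sphere of quaternionic imaginary units. -/
def Sphere : Set (Quaternion ℝ) := {J | J * J = -1}

/-- The point `α + iβ ∈ ℂⁿ`. -/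
noncomputable def cpt {n : ℕ} (α β : Fin n → ℝ) : Fin n → ℂ :=
  fun t => (α t : ℂ) + (β t : ℂ) * Complex.I

/-- The point `α + βJ ∈ ℍⁿ`. -/
noncomputable def qpt {n : ℕ} (α β : Fin n → ℝ) (J : Quaternion ℝ) : Fin n → Quaternion ℝ :=
  fun t => (α t : Quaternion ℝ) + (β t : Quaternion ℝ) * J

/-- Componentwise complex conjugation on `ℂⁿ`. -/
def conjPt {n : ℕ} (z : Fin n → ℂ) : Fin n → ℂ := fun t => (starRingEnd ℂ) (z t)


noncomputable def iQ : Quaternion ℝ := ⟨0, 1, 0, 0⟩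

lemma iQ_sq : iQ * iQ = -1 := by
  ext <;> simp [Quaternion.re_mul, Quaternion.imI_mul, Quaternion.imJ_mul, Quaternion.imK_mul] <;> simp [iQ] <;> rfl

lemma iQ_mem : iQ ∈ Sphere := iQ_sq

lemma neg_iQ_mem : -iQ ∈ Sphere := by
  show -iQ * -iQ = -1
  rw [neg_mul_neg, iQ_sq]

lemma iQ_ne_zero : iQ ≠ 0 := by
  intro h
  have := congrArg QuaternionAlgebra.imI h
  simp [iQ, Quaternion.imI_zero] at this

/-- Characterization of slice regularity by holomorphy of all slice restrictions. -/
theorem slice_regular_iff_slices_holomorphic {n : ℕ} (D : Set (Fin n → ℂ)) (hD : IsOpen D)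
    (hDconj : ∀ z ∈ D, conjPt z ∈ D)
    (F₁ F₂ : (Fin n → ℂ) → Quaternion ℝ)
    (hF₁ : ∀ z ∈ D, F₁ (conjPt z) = F₁ z)
    (hF₂ : ∀ z ∈ D, F₂ (conjPt z) = - F₂ z)
    (hF₁C : ContDiffOn ℝ 1 F₁ D) (hF₂C : ContDiffOn ℝ 1 F₂ D) :
    (∀ t : Fin n, ∀ z ∈ D,
        fderiv ℝ F₁ z (Pi.single t 1) = fderiv ℝ F₂ z (Pi.single t Complex.I) ∧
        fderiv ℝ F₁ z (Pi.single t Complex.I) = - fderiv ℝ F₂ z (Pi.single t 1)) ↔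
    (∀ J ∈ Sphere, ∀ t : Fin n, ∀ z ∈ D,
        fderiv ℝ (fun w => F₁ w + J * F₂ w) z (Pi.single t 1)
          + J * fderiv ℝ (fun w => F₁ w + J * F₂ w) z (Pi.single t Complex.I) = 0) := by
  have hderiv : ∀ (J : Quaternion ℝ), ∀ z ∈ D, ∀ v : Fin n → ℂ,
      fderiv ℝ (fun w => F₁ w + J * F₂ w) z v
        = fderiv ℝ F₁ z v + J * fderiv ℝ F₂ z v := by
    intro J z hz v
    have hmem : D ∈ nhds z := hD.mem_nhds hz
    have d1 : DifferentiableAt ℝ F₁ z :=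
      (hF₁C.contDiffAt hmem).differentiableAt one_ne_zero
    have d2 : DifferentiableAt ℝ F₂ z :=
      (hF₂C.contDiffAt hmem).differentiableAt one_ne_zero
    have d2' : DifferentiableAt ℝ (fun w => J * F₂ w) z := d2.const_mul J
    rw [fderiv_fun_add d1 d2', fderiv_const_mul d2 J]
    simp [smul_eq_mul]
  constructor
  · intro h J hJ t z hz
    obtain ⟨h1, h2⟩ := h t z hz
    have hJ2 : J * J = -1 := hJ
    rw [hderiv J z hz, hderiv J z hz, h1, h2, mul_add, ← mul_assoc, hJ2]
    ring_nf
    simp [mul_comm]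
  · intro h t z hz
    set p := fderiv ℝ F₁ z (Pi.single t 1) with hp
    set q := fderiv ℝ F₂ z (Pi.single t 1) with hq
    set r := fderiv ℝ F₁ z (Pi.single t Complex.I) with hr
    set s := fderiv ℝ F₂ z (Pi.single t Complex.I) with hs
    have e1 := h iQ iQ_mem t z hz
    have e2 := h (-iQ) neg_iQ_mem t z hz
    rw [hderiv iQ z hz, hderiv iQ z hz] at e1
    rw [hderiv (-iQ) z hz, hderiv (-iQ) z hz] at e2
    -- e1 : (p + iQ*s') ... normalize
    have e1' : (p - s) + iQ * (q + r) = 0 := by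
      rw [mul_add]
      rw [mul_add, ← mul_assoc, iQ_sq, neg_one_mul] at e1
      rw [← e1]; abel
    have e2' : (p - s) - iQ * (q + r) = 0 := by
      rw [mul_add]
      simp only [neg_mul, mul_neg, mul_add, ← mul_assoc, iQ_sq, neg_one_mul, neg_neg, one_mul] at e2
      rw [← e2]; abel
    have ha : p - s = 0 := by
      have hsum : (p - s) + (p - s) = 0 := by
        have := congrArg₂ (· + ·) e1' e2'
        simp only [add_zero] at this
        rw [← this]; abel
      have h2 : (2 : ℝ) • (p - s) = 0 := by rw [two_smul]; exact hsum
      simpa using (smul_eq_zero.mp h2).resolve_left (by norm_num)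
    have hb : q + r = 0 := by
      have : iQ * (q + r) = 0 := by
        rw [ha, zero_add] at e1'; exact e1'
      rcases mul_eq_zero.mp this with h' | h'
      · exact absurd h' iQ_ne_zero
      · exact h'
    constructor
    · exact sub_eq_zero.mp ha
    · rw [eq_neg_iff_add_eq_zero, add_comm]
      exact hb
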